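/- Let Q be the subgroup of U(8,ℂ) generated by X_Q = {X₀, CX₁₀, CX₂₀, CCX₀}, D the subgroup generated by X_D = {ω, S₀, S₁, S₂, CS₀₁, CS₁₂, CS₀₂, CCZ}, and QD the subgroup generated by X_Q ∪ X_D. Then D is a normal subgroup of QD, and the multiplication map Q × D → QD, (q,d) ↦ q·d, is a bijection; i.e., QD is the internal semidirect product Q ⋉ D. -/

import Mathlib

noncomputable section
open Matrix Complex

abbrev M8 := Matrix (Fin 8) (Fin 8) ℂ
abbrev U8 := Matrix.unitaryGroup (Fin 8) ℂ

namespace CCS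

/-- qubit 0 (most significant bit) of a basis index. -/
def b0 (m : Fin 8) : ℕ := m.val / 4
def b1 (m : Fin 8) : ℕ := m.val / 2 % 2
def b2 (m : Fin 8) : ℕ := m.val % 2

/-- basis index with qubit values `a`, `b`, `c` (mod 2). -/
def idx (a b c : ℕ) : Fin 8 := ⟨4 * (a % 2) + 2 * (b % 2) + c % 2, by omega⟩

/-- the permutation matrix sending `e_s` to `e_{σ s}`. -/
def permMat (σ : Fin 8 → Fin 8) : M8 := fun r s => if r = σ s then 1 else 0

def q0 (m : Fin 8) : Fin 2 := ⟨b0 m, by simp [b0]; omega⟩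
def q1 (m : Fin 8) : Fin 2 := ⟨b1 m, by simp [b1]; omega⟩
def q2 (m : Fin 8) : Fin 2 := ⟨b2 m, by simp [b2]; omega⟩

def Kmat : Matrix (Fin 2) (Fin 2) ℂ := (1 / (1 + I)) • !![1, 1; 1, -1]
def Smat : Matrix (Fin 2) (Fin 2) ℂ := !![1, 0; 0, I]

/-- `A ⊗ I₂ ⊗ I₂` -/
def K0 : M8 := fun r s => Kmat (q0 r) (q0 s) * (if q1 r = q1 s ∧ q2 r = q2 s then 1 else 0)
def K1 : M8 := fun r s => Kmat (q1 r) (q1 s) * (if q0 r = q0 s ∧ q2 r = q2 s then 1 else 0)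
def K2 : M8 := fun r s => Kmat (q2 r) (q2 s) * (if q0 r = q0 s ∧ q1 r = q1 s then 1 else 0)

def omega8 : M8 := Matrix.diagonal fun _ => I
def S0 : M8 := Matrix.diagonal fun m => I ^ b0 m
def S1 : M8 := Matrix.diagonal fun m => I ^ b1 m
def S2 : M8 := Matrix.diagonal fun m => I ^ b2 m
def CS01 : M8 := Matrix.diagonal fun m => I ^ (b0 m * b1 m)
def CS12 : M8 := Matrix.diagonal fun m => I ^ (b1 m * b2 m)
def CS02 : M8 := Matrix.diagonal fun m => I ^ (b0 m * b2 m)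
def CCZ : M8 := Matrix.diagonal fun m => (-1 : ℂ) ^ (b0 m * b1 m * b2 m)

def X0 : M8 := permMat fun m => idx (b0 m + 1) (b1 m) (b2 m)
def X1 : M8 := permMat fun m => idx (b0 m) (b1 m + 1) (b2 m)
def X2 : M8 := permMat fun m => idx (b0 m) (b1 m) (b2 m + 1)
def CX01 : M8 := permMat fun m => idx (b0 m) (b1 m + b0 m) (b2 m)
def CX10 : M8 := permMat fun m => idx (b0 m + b1 m) (b1 m) (b2 m)
def CX12 : M8 := permMat fun m => idx (b0 m) (b1 m) (b2 m + b1 m)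
def CX21 : M8 := permMat fun m => idx (b0 m) (b1 m + b2 m) (b2 m)
def CX02 : M8 := permMat fun m => idx (b0 m) (b1 m) (b2 m + b0 m)
def CX20 : M8 := permMat fun m => idx (b0 m + b2 m) (b1 m) (b2 m)
def CCX0 : M8 := permMat fun m => idx (b0 m + b1 m * b2 m) (b1 m) (b2 m)
def Swap01 : M8 := permMat fun m => idx (b1 m) (b0 m) (b2 m)
def Swap12 : M8 := permMat fun m => idx (b0 m) (b2 m) (b1 m)

/-- The ring ℤ[1/2, i]. -/
def Zhi : Subring ℂ := Subring.closure {1 / 2, I}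

/-- The 3-qubit Clifford+CS group, as a subgroup of U(8,ℂ). -/
def CliffordCS3 : Subgroup U8 :=
  Subgroup.closure {u : U8 | (u : M8) ∈ ({omega8, K0, K1, K2, S0, S1, S2, CS01, CS12} : Set M8)}

end CCS

noncomputable section
open CCS

/-- The subgroup `Q = ⟨X₀, CX₁₀, CX₂₀, CCX₀⟩` of U(8,ℂ). -/
def Qgrp : Subgroup U8 :=
  Subgroup.closure {u : U8 | (u : M8) ∈ ({X0, CX10, CX20, CCX0} : Set M8)}

/-- The subgroup `D = ⟨ω, S₀, S₁, S₂, CS₀₁, CS₁₂, CS₀₂, CCZ⟩` of U(8,ℂ). -/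
def Dgrp : Subgroup U8 :=
  Subgroup.closure {u : U8 | (u : M8) ∈
    ({omega8, S0, S1, S2, CS01, CS12, CS02, CCZ} : Set M8)}

/-- The subgroup `QD` generated by `X_Q ∪ X_D`. -/
def QDgrp : Subgroup U8 :=
  Subgroup.closure {u : U8 | (u : M8) ∈
    ({X0, CX10, CX20, CCX0} ∪
      {omega8, S0, S1, S2, CS01, CS12, CS02, CCZ} : Set M8)}

-- ===== auxiliary machinery =====
section Aux
open CCS

lemma permMat_mul_permMat (σ τ : Fin 8 → Fin 8) :
    permMat σ * permMat τ = permMat (σ ∘ τ) := by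
  ext r s
  simp only [Matrix.mul_apply, permMat, Function.comp]
  rw [Finset.sum_eq_single (τ s)]
  · simp
  · intro k _ hk; simp [hk]
  · simp

lemma permMat_id : permMat id = (1 : M8) := by
  ext r s; simp [permMat, Matrix.one_apply]

def pMat (σ : Equiv.Perm (Fin 8)) : M8 := permMat σ

lemma pMat_mul (σ τ : Equiv.Perm (Fin 8)) : pMat σ * pMat τ = pMat (σ * τ) := by
  rw [pMat, pMat, permMat_mul_permMat]; rfl

lemma pMat_one : pMat 1 = (1 : M8) := permMat_id

lemma star_pMat (σ : Equiv.Perm (Fin 8)) : star (pMat σ) = pMat σ⁻¹ := by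
  ext r s
  simp only [pMat, permMat, Matrix.star_eq_conjTranspose, Matrix.conjTranspose_apply,
    apply_ite (starRingEnd ℂ), _root_.map_one, _root_.map_zero]
  simp [eq_comm, Equiv.eq_symm_apply, Equiv.Perm.inv_def]

lemma pMat_mem (σ : Equiv.Perm (Fin 8)) : pMat σ ∈ Matrix.unitaryGroup (Fin 8) ℂ := by
  rw [Matrix.mem_unitaryGroup_iff, star_pMat, pMat_mul, mul_inv_cancel, pMat_one]

def pU (σ : Equiv.Perm (Fin 8)) : U8 := ⟨pMat σ, pMat_mem σ⟩

lemma pU_mul (σ τ : Equiv.Perm (Fin 8)) : pU σ * pU τ = pU (σ * τ) :=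
  Subtype.ext (pMat_mul σ τ)

lemma pU_one : pU 1 = 1 := Subtype.ext pMat_one

lemma diag_mem (d : Fin 8 → ℂ) (h : ∀ m, d m * star (d m) = 1) :
    Matrix.diagonal d ∈ Matrix.unitaryGroup (Fin 8) ℂ := by
  rw [Matrix.mem_unitaryGroup_iff, Matrix.star_eq_conjTranspose,
    Matrix.diagonal_conjTranspose, Matrix.diagonal_mul_diagonal]
  rw [show (fun m => d m * star d m) = fun _ => (1:ℂ) from funext fun m => h m]
  exact Matrix.diagonal_one

def dU (d : Fin 8 → ℂ) (h : ∀ m, d m * star (d m) = 1) : U8 :=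
  ⟨Matrix.diagonal d, diag_mem d h⟩

lemma diag_mul_pMat (d : Fin 8 → ℂ) (τ : Equiv.Perm (Fin 8)) :
    Matrix.diagonal d * pMat τ = fun r s => if r = τ s then d r else 0 := by
  ext r s
  simp only [Matrix.mul_apply, pMat, permMat, Matrix.diagonal_apply]
  rw [Finset.sum_eq_single r]
  · simp
  · intro k _ hk; simp [Ne.symm hk]
  · simp

lemma pMat_diag_conj (σ : Equiv.Perm (Fin 8)) (d : Fin 8 → ℂ) :
    pMat σ * Matrix.diagonal d * pMat σ⁻¹ = Matrix.diagonal (fun m => d (σ⁻¹ m)) := by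
  rw [mul_assoc, diag_mul_pMat]
  ext r s
  simp only [Matrix.mul_apply, pMat, permMat, Matrix.diagonal_apply]
  show ∑ k, permMat σ r k * (if k = σ⁻¹ s then d k else 0) = _
  simp only [permMat]
  rw [Finset.sum_eq_single (σ⁻¹ s)]
  · by_cases h : r = σ (σ⁻¹ s) <;> simp_all [Equiv.Perm.inv_def, Equiv.apply_symm_apply]
  · intro k _ hk
    rw [Equiv.Perm.inv_def] at hk
    by_cases h : r = σ k <;> simp [h, hk]
  · simp

lemma unit_pow {z : ℂ} (hz : z * star z = 1) (k : ℕ) : z ^ k * star (z ^ k) = 1 := by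
  rw [star_pow, ← mul_pow, hz, one_pow]

lemma I_unit : Complex.I * star Complex.I = 1 := by
  simp [Complex.star_def, Complex.conj_I, Complex.I_mul_I]

lemma negone_unit : (-1 : ℂ) * star (-1 : ℂ) = 1 := by simp

-- permutations
def fX0 : Fin 8 → Fin 8 := fun m => idx (b0 m + 1) (b1 m) (b2 m)
def fC10 : Fin 8 → Fin 8 := fun m => idx (b0 m + b1 m) (b1 m) (b2 m)
def fC20 : Fin 8 → Fin 8 := fun m => idx (b0 m + b2 m) (b1 m) (b2 m)
def fCC : Fin 8 → Fin 8 := fun m => idx (b0 m + b1 m * b2 m) (b1 m) (b2 m)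

lemma fX0_inv : Function.Involutive fX0 := fun m => by revert m; decide
lemma fC10_inv : Function.Involutive fC10 := fun m => by revert m; decide
lemma fC20_inv : Function.Involutive fC20 := fun m => by revert m; decide
lemma fCC_inv : Function.Involutive fCC := fun m => by revert m; decide

def σX0 : Equiv.Perm (Fin 8) := fX0_inv.toPerm
def σC10 : Equiv.Perm (Fin 8) := fC10_inv.toPerm
def σC20 : Equiv.Perm (Fin 8) := fC20_inv.toPerm
def σCC : Equiv.Perm (Fin 8) := fCC_inv.toPerm

lemma σX0_inv : σX0⁻¹ = σX0 := by ext m; simp [σX0, Equiv.Perm.inv_def]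
lemma σC10_inv : σC10⁻¹ = σC10 := by ext m; simp [σC10, Equiv.Perm.inv_def]
lemma σC20_inv : σC20⁻¹ = σC20 := by ext m; simp [σC20, Equiv.Perm.inv_def]
lemma σCC_inv : σCC⁻¹ = σCC := by ext m; simp [σCC, Equiv.Perm.inv_def]

-- unitary generators
def uX0 : U8 := pU σX0
def uC10 : U8 := pU σC10
def uC20 : U8 := pU σC20
def uCC : U8 := pU σCC

def dω : Fin 8 → ℂ := fun _ => Complex.I
def dS0 : Fin 8 → ℂ := fun m => Complex.I ^ b0 m
def dS1 : Fin 8 → ℂ := fun m => Complex.I ^ b1 m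
def dS2 : Fin 8 → ℂ := fun m => Complex.I ^ b2 m
def dCS01 : Fin 8 → ℂ := fun m => Complex.I ^ (b0 m * b1 m)
def dCS12 : Fin 8 → ℂ := fun m => Complex.I ^ (b1 m * b2 m)
def dCS02 : Fin 8 → ℂ := fun m => Complex.I ^ (b0 m * b2 m)
def dCCZ : Fin 8 → ℂ := fun m => (-1 : ℂ) ^ (b0 m * b1 m * b2 m)

lemma hdω : ∀ m, dω m * star (dω m) = 1 := fun _ => I_unit
def uω : U8 := dU dω hdω
lemma hdS0 : ∀ m, dS0 m * star (dS0 m) = 1 := fun _ => unit_pow I_unit _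
def uS0 : U8 := dU dS0 hdS0
lemma hdS1 : ∀ m, dS1 m * star (dS1 m) = 1 := fun _ => unit_pow I_unit _
def uS1 : U8 := dU dS1 hdS1
lemma hdS2 : ∀ m, dS2 m * star (dS2 m) = 1 := fun _ => unit_pow I_unit _
def uS2 : U8 := dU dS2 hdS2
lemma hdCS01 : ∀ m, dCS01 m * star (dCS01 m) = 1 := fun _ => unit_pow I_unit _
def uCS01 : U8 := dU dCS01 hdCS01
lemma hdCS12 : ∀ m, dCS12 m * star (dCS12 m) = 1 := fun _ => unit_pow I_unit _
def uCS12 : U8 := dU dCS12 hdCS12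
lemma hdCS02 : ∀ m, dCS02 m * star (dCS02 m) = 1 := fun _ => unit_pow I_unit _
def uCS02 : U8 := dU dCS02 hdCS02
lemma hdCCZ : ∀ m, dCCZ m * star (dCCZ m) = 1 := fun _ => unit_pow negone_unit _
def uCCZ : U8 := dU dCCZ hdCCZ

end Aux
section Aux2
open CCS

lemma coe_inv_U8 (u : U8) : ((u⁻¹ : U8) : M8) = star (u : M8) := by
  rw [← Unitary.star_eq_inv]; rfl

lemma memD_gen : ∀ u : U8, (u : M8) ∈
    ({omega8, S0, S1, S2, CS01, CS12, CS02, CCZ} : Set M8) → u ∈ Dgrp :=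
  fun _ hu => Subgroup.subset_closure hu

lemma uω_mem : uω ∈ Dgrp := memD_gen _ (Or.inl rfl)
lemma uS0_mem : uS0 ∈ Dgrp := memD_gen _ (Or.inr (Or.inl rfl))
lemma uS1_mem : uS1 ∈ Dgrp := memD_gen _ (Or.inr (Or.inr (Or.inl rfl)))
lemma uS2_mem : uS2 ∈ Dgrp := memD_gen _ (Or.inr (Or.inr (Or.inr (Or.inl rfl))))
lemma uCS01_mem : uCS01 ∈ Dgrp := memD_gen _ (Or.inr (Or.inr (Or.inr (Or.inr (Or.inl rfl)))))
lemma uCS12_mem : uCS12 ∈ Dgrp :=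
  memD_gen _ (Or.inr (Or.inr (Or.inr (Or.inr (Or.inr (Or.inl rfl))))))
lemma uCS02_mem : uCS02 ∈ Dgrp :=
  memD_gen _ (Or.inr (Or.inr (Or.inr (Or.inr (Or.inr (Or.inr (Or.inl rfl)))))))
lemma uCCZ_mem : uCCZ ∈ Dgrp :=
  memD_gen _ (Or.inr (Or.inr (Or.inr (Or.inr (Or.inr (Or.inr (Or.inr rfl)))))))

/-- conjugation of a diagonal generator by a permutation generator -/
lemma conj_mem {σ : Equiv.Perm (Fin 8)} (hσ : σ⁻¹ = σ) (d : Fin 8 → ℂ)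
    (hd : ∀ m, d m * star (d m) = 1) {w : U8} (hw : w ∈ Dgrp)
    (h : Matrix.diagonal (fun m => d (σ m)) = (w : M8)) :
    pU σ * dU d hd * (pU σ)⁻¹ ∈ Dgrp := by
  have hcoe : ((pU σ * dU d hd * (pU σ)⁻¹ : U8) : M8)
      = pMat σ * Matrix.diagonal d * pMat σ⁻¹ := by
    rw [MulMemClass.coe_mul, MulMemClass.coe_mul, coe_inv_U8]
    rw [show star ((pU σ : U8) : M8) = pMat σ⁻¹ from star_pMat σ]
    rfl
  have : pU σ * dU d hd * (pU σ)⁻¹ = w := by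
    apply Subtype.ext
    rw [hcoe, pMat_diag_conj, hσ, h]
  rw [this]; exact hw

end Aux2
section Aux3
open CCS
lemma coe_toPerm' {f : Fin 8 → Fin 8} (h : Function.Involutive f) :
    ⇑(h.toPerm) = f := rfl
end Aux3
section Aux3
open CCS

lemma unit_mul {a b : ℂ} (ha : a * star a = 1) (hb : b * star b = 1) :
    (a * b) * star (a * b) = 1 := by
  rw [StarMul.star_mul, show a * b * (star b * star a) = (a * star a) * (b * star b) by ring, ha, hb,
    one_mul]

lemma dU_mul (d1 d2 : Fin 8 → ℂ) (h1 h2) :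
    dU d1 h1 * dU d2 h2 = dU (fun m => d1 m * d2 m) (fun m => unit_mul (h1 m) (h2 m)) :=
  Subtype.ext (Matrix.diagonal_mul_diagonal _ _)

lemma dU_congr (d1 d2 : Fin 8 → ℂ) (h1 h2) (h : ∀ m, d1 m = d2 m) :
    dU d1 h1 = dU d2 h2 := by
  apply Subtype.ext
  show Matrix.diagonal d1 = Matrix.diagonal d2
  rw [funext h]

lemma conj_mem' {σ : Equiv.Perm (Fin 8)} (hσ : σ⁻¹ = σ) (d : Fin 8 → ℂ)
    (hd : ∀ m, d m * star (d m) = 1) {w : U8} (hw : w ∈ Dgrp)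
    (h : dU (fun m => d (σ m)) (fun m => hd (σ m)) = w) :
    pU σ * dU d hd * (pU σ)⁻¹ ∈ Dgrp := by
  refine conj_mem hσ d hd hw ?_
  rw [← h]; rfl

lemma cX0_CCZ : uX0 * uCCZ * uX0⁻¹ ∈ Dgrp := by
  refine conj_mem' σX0_inv dCCZ _ (mul_mem (mul_mem uCS12_mem uCS12_mem) uCCZ_mem) ?_
  rw [uCS12, uCCZ, dU_mul, dU_mul]
  apply dU_congr
  intro m
  fin_cases m <;>
    norm_num [σX0, coe_toPerm', fX0, dCS12, dCCZ, b0, b1, b2, idx]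

end Aux3
section Conj
open CCS

lemma conj_X0_ω : uX0 * uω * uX0⁻¹ ∈ Dgrp := by
  refine conj_mem' σX0_inv dω _ uω_mem ?_
  rw [uω]
  apply dU_congr
  intro m
  fin_cases m <;> norm_num [σX0, coe_toPerm', fX0, dω, b0, b1, b2, idx]

lemma conj_X0_S0 : uX0 * uS0 * uX0⁻¹ ∈ Dgrp := by
  refine conj_mem' σX0_inv dS0 _ (mul_mem (mul_mem (mul_mem uω_mem uS0_mem) uS0_mem) uS0_mem) ?_
  rw [uω, uS0, dU_mul, dU_mul, dU_mul]
  apply dU_congr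
  intro m
  fin_cases m <;> norm_num [σX0, coe_toPerm', fX0, dS0, dω, b0, b1, b2, idx]

lemma conj_X0_S1 : uX0 * uS1 * uX0⁻¹ ∈ Dgrp := by
  refine conj_mem' σX0_inv dS1 _ uS1_mem ?_
  rw [uS1]
  apply dU_congr
  intro m
  fin_cases m <;> norm_num [σX0, coe_toPerm', fX0, dS1, b0, b1, b2, idx]

lemma conj_X0_S2 : uX0 * uS2 * uX0⁻¹ ∈ Dgrp := by
  refine conj_mem' σX0_inv dS2 _ uS2_mem ?_
  rw [uS2]
  apply dU_congr
  intro m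
  fin_cases m <;> norm_num [σX0, coe_toPerm', fX0, dS2, b0, b1, b2, idx]

lemma conj_X0_CS01 : uX0 * uCS01 * uX0⁻¹ ∈ Dgrp := by
  refine conj_mem' σX0_inv dCS01 _ (mul_mem (mul_mem (mul_mem uS1_mem uCS01_mem) uCS01_mem) uCS01_mem) ?_
  rw [uS1, uCS01, dU_mul, dU_mul, dU_mul]
  apply dU_congr
  intro m
  fin_cases m <;> norm_num [σX0, coe_toPerm', fX0, dCS01, dS1, b0, b1, b2, idx]

lemma conj_X0_CS12 : uX0 * uCS12 * uX0⁻¹ ∈ Dgrp := by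
  refine conj_mem' σX0_inv dCS12 _ uCS12_mem ?_
  rw [uCS12]
  apply dU_congr
  intro m
  fin_cases m <;> norm_num [σX0, coe_toPerm', fX0, dCS12, b0, b1, b2, idx]

lemma conj_X0_CS02 : uX0 * uCS02 * uX0⁻¹ ∈ Dgrp := by
  refine conj_mem' σX0_inv dCS02 _ (mul_mem (mul_mem (mul_mem uS2_mem uCS02_mem) uCS02_mem) uCS02_mem) ?_
  rw [uS2, uCS02, dU_mul, dU_mul, dU_mul]
  apply dU_congr
  intro m
  fin_cases m <;> norm_num [σX0, coe_toPerm', fX0, dCS02, dS2, b0, b1, b2, idx]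

lemma conj_X0_CCZ : uX0 * uCCZ * uX0⁻¹ ∈ Dgrp := by
  refine conj_mem' σX0_inv dCCZ _ (mul_mem (mul_mem uCS12_mem uCS12_mem) uCCZ_mem) ?_
  rw [uCS12, uCCZ, dU_mul, dU_mul]
  apply dU_congr
  intro m
  fin_cases m <;> norm_num [σX0, coe_toPerm', fX0, dCCZ, dCS12, b0, b1, b2, idx]

lemma conj_C10_ω : uC10 * uω * uC10⁻¹ ∈ Dgrp := by
  refine conj_mem' σC10_inv dω _ uω_mem ?_
  rw [uω]
  apply dU_congr
  intro m
  fin_cases m <;> norm_num [σC10, coe_toPerm', fC10, dω, b0, b1, b2, idx]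

lemma conj_C10_S0 : uC10 * uS0 * uC10⁻¹ ∈ Dgrp := by
  refine conj_mem' σC10_inv dS0 _ (mul_mem (mul_mem (mul_mem uS0_mem uS1_mem) uCS01_mem) uCS01_mem) ?_
  rw [uS0, uS1, uCS01, dU_mul, dU_mul, dU_mul]
  apply dU_congr
  intro m
  fin_cases m <;> norm_num [σC10, coe_toPerm', fC10, dCS01, dS0, dS1, b0, b1, b2, idx]

lemma conj_C10_S1 : uC10 * uS1 * uC10⁻¹ ∈ Dgrp := by
  refine conj_mem' σC10_inv dS1 _ uS1_mem ?_
  rw [uS1]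
  apply dU_congr
  intro m
  fin_cases m <;> norm_num [σC10, coe_toPerm', fC10, dS1, b0, b1, b2, idx]

lemma conj_C10_S2 : uC10 * uS2 * uC10⁻¹ ∈ Dgrp := by
  refine conj_mem' σC10_inv dS2 _ uS2_mem ?_
  rw [uS2]
  apply dU_congr
  intro m
  fin_cases m <;> norm_num [σC10, coe_toPerm', fC10, dS2, b0, b1, b2, idx]

lemma conj_C10_CS01 : uC10 * uCS01 * uC10⁻¹ ∈ Dgrp := by
  refine conj_mem' σC10_inv dCS01 _ (mul_mem (mul_mem (mul_mem uS1_mem uCS01_mem) uCS01_mem) uCS01_mem) ?_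
  rw [uS1, uCS01, dU_mul, dU_mul, dU_mul]
  apply dU_congr
  intro m
  fin_cases m <;> norm_num [σC10, coe_toPerm', fC10, dCS01, dS1, b0, b1, b2, idx]

lemma conj_C10_CS12 : uC10 * uCS12 * uC10⁻¹ ∈ Dgrp := by
  refine conj_mem' σC10_inv dCS12 _ uCS12_mem ?_
  rw [uCS12]
  apply dU_congr
  intro m
  fin_cases m <;> norm_num [σC10, coe_toPerm', fC10, dCS12, b0, b1, b2, idx]

lemma conj_C10_CS02 : uC10 * uCS02 * uC10⁻¹ ∈ Dgrp := by
  refine conj_mem' σC10_inv dCS02 _ (mul_mem (mul_mem uCS02_mem uCS12_mem) uCCZ_mem) ?_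
  rw [uCS02, uCS12, uCCZ, dU_mul, dU_mul]
  apply dU_congr
  intro m
  fin_cases m <;> norm_num [σC10, coe_toPerm', fC10, dCCZ, dCS02, dCS12, b0, b1, b2, idx]

lemma conj_C10_CCZ : uC10 * uCCZ * uC10⁻¹ ∈ Dgrp := by
  refine conj_mem' σC10_inv dCCZ _ (mul_mem (mul_mem uCS12_mem uCS12_mem) uCCZ_mem) ?_
  rw [uCS12, uCCZ, dU_mul, dU_mul]
  apply dU_congr
  intro m
  fin_cases m <;> norm_num [σC10, coe_toPerm', fC10, dCCZ, dCS12, b0, b1, b2, idx]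

lemma conj_C20_ω : uC20 * uω * uC20⁻¹ ∈ Dgrp := by
  refine conj_mem' σC20_inv dω _ uω_mem ?_
  rw [uω]
  apply dU_congr
  intro m
  fin_cases m <;> norm_num [σC20, coe_toPerm', fC20, dω, b0, b1, b2, idx]

lemma conj_C20_S0 : uC20 * uS0 * uC20⁻¹ ∈ Dgrp := by
  refine conj_mem' σC20_inv dS0 _ (mul_mem (mul_mem (mul_mem uS0_mem uS2_mem) uCS02_mem) uCS02_mem) ?_
  rw [uS0, uS2, uCS02, dU_mul, dU_mul, dU_mul]
  apply dU_congr
  intro m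
  fin_cases m <;> norm_num [σC20, coe_toPerm', fC20, dCS02, dS0, dS2, b0, b1, b2, idx]

lemma conj_C20_S1 : uC20 * uS1 * uC20⁻¹ ∈ Dgrp := by
  refine conj_mem' σC20_inv dS1 _ uS1_mem ?_
  rw [uS1]
  apply dU_congr
  intro m
  fin_cases m <;> norm_num [σC20, coe_toPerm', fC20, dS1, b0, b1, b2, idx]

lemma conj_C20_S2 : uC20 * uS2 * uC20⁻¹ ∈ Dgrp := by
  refine conj_mem' σC20_inv dS2 _ uS2_mem ?_
  rw [uS2]
  apply dU_congr
  intro m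
  fin_cases m <;> norm_num [σC20, coe_toPerm', fC20, dS2, b0, b1, b2, idx]

lemma conj_C20_CS01 : uC20 * uCS01 * uC20⁻¹ ∈ Dgrp := by
  refine conj_mem' σC20_inv dCS01 _ (mul_mem (mul_mem uCS01_mem uCS12_mem) uCCZ_mem) ?_
  rw [uCS01, uCS12, uCCZ, dU_mul, dU_mul]
  apply dU_congr
  intro m
  fin_cases m <;> norm_num [σC20, coe_toPerm', fC20, dCCZ, dCS01, dCS12, b0, b1, b2, idx]

lemma conj_C20_CS12 : uC20 * uCS12 * uC20⁻¹ ∈ Dgrp := by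
  refine conj_mem' σC20_inv dCS12 _ uCS12_mem ?_
  rw [uCS12]
  apply dU_congr
  intro m
  fin_cases m <;> norm_num [σC20, coe_toPerm', fC20, dCS12, b0, b1, b2, idx]

lemma conj_C20_CS02 : uC20 * uCS02 * uC20⁻¹ ∈ Dgrp := by
  refine conj_mem' σC20_inv dCS02 _ (mul_mem (mul_mem (mul_mem uS2_mem uCS02_mem) uCS02_mem) uCS02_mem) ?_
  rw [uS2, uCS02, dU_mul, dU_mul, dU_mul]
  apply dU_congr
  intro m
  fin_cases m <;> norm_num [σC20, coe_toPerm', fC20, dCS02, dS2, b0, b1, b2, idx]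

lemma conj_C20_CCZ : uC20 * uCCZ * uC20⁻¹ ∈ Dgrp := by
  refine conj_mem' σC20_inv dCCZ _ (mul_mem (mul_mem uCS12_mem uCS12_mem) uCCZ_mem) ?_
  rw [uCS12, uCCZ, dU_mul, dU_mul]
  apply dU_congr
  intro m
  fin_cases m <;> norm_num [σC20, coe_toPerm', fC20, dCCZ, dCS12, b0, b1, b2, idx]

lemma conj_CC_ω : uCC * uω * uCC⁻¹ ∈ Dgrp := by
  refine conj_mem' σCC_inv dω _ uω_mem ?_
  rw [uω]
  apply dU_congr
  intro m
  fin_cases m <;> norm_num [σCC, coe_toPerm', fCC, dω, b0, b1, b2, idx]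

lemma conj_CC_S0 : uCC * uS0 * uCC⁻¹ ∈ Dgrp := by
  refine conj_mem' σCC_inv dS0 _ (mul_mem (mul_mem uS0_mem uCS12_mem) uCCZ_mem) ?_
  rw [uS0, uCS12, uCCZ, dU_mul, dU_mul]
  apply dU_congr
  intro m
  fin_cases m <;> norm_num [σCC, coe_toPerm', fCC, dCCZ, dCS12, dS0, b0, b1, b2, idx]

lemma conj_CC_S1 : uCC * uS1 * uCC⁻¹ ∈ Dgrp := by
  refine conj_mem' σCC_inv dS1 _ uS1_mem ?_
  rw [uS1]
  apply dU_congr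
  intro m
  fin_cases m <;> norm_num [σCC, coe_toPerm', fCC, dS1, b0, b1, b2, idx]

lemma conj_CC_S2 : uCC * uS2 * uCC⁻¹ ∈ Dgrp := by
  refine conj_mem' σCC_inv dS2 _ uS2_mem ?_
  rw [uS2]
  apply dU_congr
  intro m
  fin_cases m <;> norm_num [σCC, coe_toPerm', fCC, dS2, b0, b1, b2, idx]

lemma conj_CC_CS01 : uCC * uCS01 * uCC⁻¹ ∈ Dgrp := by
  refine conj_mem' σCC_inv dCS01 _ (mul_mem (mul_mem uCS01_mem uCS12_mem) uCCZ_mem) ?_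
  rw [uCS01, uCS12, uCCZ, dU_mul, dU_mul]
  apply dU_congr
  intro m
  fin_cases m <;> norm_num [σCC, coe_toPerm', fCC, dCCZ, dCS01, dCS12, b0, b1, b2, idx]

lemma conj_CC_CS12 : uCC * uCS12 * uCC⁻¹ ∈ Dgrp := by
  refine conj_mem' σCC_inv dCS12 _ uCS12_mem ?_
  rw [uCS12]
  apply dU_congr
  intro m
  fin_cases m <;> norm_num [σCC, coe_toPerm', fCC, dCS12, b0, b1, b2, idx]

lemma conj_CC_CS02 : uCC * uCS02 * uCC⁻¹ ∈ Dgrp := by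
  refine conj_mem' σCC_inv dCS02 _ (mul_mem (mul_mem uCS02_mem uCS12_mem) uCCZ_mem) ?_
  rw [uCS02, uCS12, uCCZ, dU_mul, dU_mul]
  apply dU_congr
  intro m
  fin_cases m <;> norm_num [σCC, coe_toPerm', fCC, dCCZ, dCS02, dCS12, b0, b1, b2, idx]

lemma conj_CC_CCZ : uCC * uCCZ * uCC⁻¹ ∈ Dgrp := by
  refine conj_mem' σCC_inv dCCZ _ (mul_mem (mul_mem uCS12_mem uCS12_mem) uCCZ_mem) ?_
  rw [uCS12, uCCZ, dU_mul, dU_mul]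
  apply dU_congr
  intro m
  fin_cases m <;> norm_num [σCC, coe_toPerm', fCC, dCCZ, dCS12, b0, b1, b2, idx]

end Conj
section Aux4
open CCS

-- the four Q-generators square to 1
lemma σX0_sq : σX0 * σX0 = 1 := Equiv.ext fun m => fX0_inv m
lemma σC10_sq : σC10 * σC10 = 1 := Equiv.ext fun m => fC10_inv m
lemma σC20_sq : σC20 * σC20 = 1 := Equiv.ext fun m => fC20_inv m
lemma σCC_sq : σCC * σCC = 1 := Equiv.ext fun m => fCC_inv m

lemma uX0_inv' : uX0⁻¹ = uX0 := by
  have : uX0 * uX0 = 1 := by rw [uX0, pU_mul, σX0_sq, pU_one]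
  exact inv_eq_of_mul_eq_one_left this
lemma uC10_inv' : uC10⁻¹ = uC10 := by
  have : uC10 * uC10 = 1 := by rw [uC10, pU_mul, σC10_sq, pU_one]
  exact inv_eq_of_mul_eq_one_left this
lemma uC20_inv' : uC20⁻¹ = uC20 := by
  have : uC20 * uC20 = 1 := by rw [uC20, pU_mul, σC20_sq, pU_one]
  exact inv_eq_of_mul_eq_one_left this
lemma uCC_inv' : uCC⁻¹ = uCC := by
  have : uCC * uCC = 1 := by rw [uCC, pU_mul, σCC_sq, pU_one]
  exact inv_eq_of_mul_eq_one_left this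

/-- conjugation by a fixed element preserving generators preserves all of `Dgrp`. -/
lemma conj_closure (g : U8)
    (H : ∀ v : U8, (v : M8) ∈ ({omega8, S0, S1, S2, CS01, CS12, CS02, CCZ} : Set M8) →
      g * v * g⁻¹ ∈ Dgrp) :
    ∀ d ∈ Dgrp, g * d * g⁻¹ ∈ Dgrp := by
  intro d hd
  induction hd using Subgroup.closure_induction with
  | mem v hv => exact H v hv
  | one => simpa using one_mem Dgrp
  | mul a b ha hb iha ihb =>
      have : g * (a * b) * g⁻¹ = (g * a * g⁻¹) * (g * b * g⁻¹) := by group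
      rw [this]; exact mul_mem iha ihb
  | inv a ha iha =>
      have : g * a⁻¹ * g⁻¹ = (g * a * g⁻¹)⁻¹ := by group
      rw [this]; exact inv_mem iha

-- identify any D-generator element with a named one
lemma conjD_X0 : ∀ d ∈ Dgrp, uX0 * d * uX0⁻¹ ∈ Dgrp := by
  refine conj_closure uX0 ?_
  rintro v (h|h|h|h|h|h|h|h) <;>
    [ (rw [show v = uω from Subtype.ext h]; exact conj_X0_ω);
      (rw [show v = uS0 from Subtype.ext h]; exact conj_X0_S0);
      (rw [show v = uS1 from Subtype.ext h]; exact conj_X0_S1);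
      (rw [show v = uS2 from Subtype.ext h]; exact conj_X0_S2);
      (rw [show v = uCS01 from Subtype.ext h]; exact conj_X0_CS01);
      (rw [show v = uCS12 from Subtype.ext h]; exact conj_X0_CS12);
      (rw [show v = uCS02 from Subtype.ext h]; exact conj_X0_CS02);
      (rw [show v = uCCZ from Subtype.ext h]; exact conj_X0_CCZ)]

lemma conjD_C10 : ∀ d ∈ Dgrp, uC10 * d * uC10⁻¹ ∈ Dgrp := by
  refine conj_closure uC10 ?_
  rintro v (h|h|h|h|h|h|h|h) <;>
    [ (rw [show v = uω from Subtype.ext h]; exact conj_C10_ω);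
      (rw [show v = uS0 from Subtype.ext h]; exact conj_C10_S0);
      (rw [show v = uS1 from Subtype.ext h]; exact conj_C10_S1);
      (rw [show v = uS2 from Subtype.ext h]; exact conj_C10_S2);
      (rw [show v = uCS01 from Subtype.ext h]; exact conj_C10_CS01);
      (rw [show v = uCS12 from Subtype.ext h]; exact conj_C10_CS12);
      (rw [show v = uCS02 from Subtype.ext h]; exact conj_C10_CS02);
      (rw [show v = uCCZ from Subtype.ext h]; exact conj_C10_CCZ)]

lemma conjD_C20 : ∀ d ∈ Dgrp, uC20 * d * uC20⁻¹ ∈ Dgrp := by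
  refine conj_closure uC20 ?_
  rintro v (h|h|h|h|h|h|h|h) <;>
    [ (rw [show v = uω from Subtype.ext h]; exact conj_C20_ω);
      (rw [show v = uS0 from Subtype.ext h]; exact conj_C20_S0);
      (rw [show v = uS1 from Subtype.ext h]; exact conj_C20_S1);
      (rw [show v = uS2 from Subtype.ext h]; exact conj_C20_S2);
      (rw [show v = uCS01 from Subtype.ext h]; exact conj_C20_CS01);
      (rw [show v = uCS12 from Subtype.ext h]; exact conj_C20_CS12);
      (rw [show v = uCS02 from Subtype.ext h]; exact conj_C20_CS02);
      (rw [show v = uCCZ from Subtype.ext h]; exact conj_C20_CCZ)]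

lemma conjD_CC : ∀ d ∈ Dgrp, uCC * d * uCC⁻¹ ∈ Dgrp := by
  refine conj_closure uCC ?_
  rintro v (h|h|h|h|h|h|h|h) <;>
    [ (rw [show v = uω from Subtype.ext h]; exact conj_CC_ω);
      (rw [show v = uS0 from Subtype.ext h]; exact conj_CC_S0);
      (rw [show v = uS1 from Subtype.ext h]; exact conj_CC_S1);
      (rw [show v = uS2 from Subtype.ext h]; exact conj_CC_S2);
      (rw [show v = uCS01 from Subtype.ext h]; exact conj_CC_CS01);
      (rw [show v = uCS12 from Subtype.ext h]; exact conj_CC_CS12);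
      (rw [show v = uCS02 from Subtype.ext h]; exact conj_CC_CS02);
      (rw [show v = uCCZ from Subtype.ext h]; exact conj_CC_CCZ)]

/-- every element of `Q` normalizes `D`. -/
lemma Qnorm : ∀ q ∈ Qgrp, (∀ d ∈ Dgrp, q * d * q⁻¹ ∈ Dgrp) ∧
    (∀ d ∈ Dgrp, q⁻¹ * d * q ∈ Dgrp) := by
  intro q hq
  induction hq using Subgroup.closure_induction with
  | mem v hv =>
      rcases hv with h|h|h|h
      · rw [show v = uX0 from Subtype.ext h]
        refine ⟨conjD_X0, fun d hd => ?_⟩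
        rw [uX0_inv']
        have h2 := conjD_X0 d hd
        rwa [uX0_inv'] at h2
      · rw [show v = uC10 from Subtype.ext h]
        refine ⟨conjD_C10, fun d hd => ?_⟩
        rw [uC10_inv']
        have h2 := conjD_C10 d hd
        rwa [uC10_inv'] at h2
      · rw [show v = uC20 from Subtype.ext h]
        refine ⟨conjD_C20, fun d hd => ?_⟩
        rw [uC20_inv']
        have h2 := conjD_C20 d hd
        rwa [uC20_inv'] at h2
      · rw [show v = uCC from Subtype.ext h]
        refine ⟨conjD_CC, fun d hd => ?_⟩
        rw [uCC_inv']
        have h2 := conjD_CC d hd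
        rwa [uCC_inv'] at h2
  | one => constructor <;> intro d hd <;> simpa using hd
  | mul a b ha hb iha ihb =>
      constructor <;> intro d hd
      · have : (a * b) * d * (a * b)⁻¹ = a * (b * d * b⁻¹) * a⁻¹ := by group
        rw [this]; exact iha.1 _ (ihb.1 d hd)
      · have : (a * b)⁻¹ * d * (a * b) = b⁻¹ * (a⁻¹ * d * a) * b := by group
        rw [this]; exact ihb.2 _ (iha.2 d hd)
  | inv a ha iha =>
      exact ⟨fun d hd => by simpa using iha.2 d hd, fun d hd => by simpa using iha.1 d hd⟩

end Aux4
section Aux5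
open CCS

/-- the subgroup of permutation matrices. -/
def PermSG : Subgroup U8 where
  carrier := {u : U8 | ∃ σ : Equiv.Perm (Fin 8), (u : M8) = pMat σ}
  mul_mem' := by
    rintro a b ⟨σ, hσ⟩ ⟨τ, hτ⟩
    exact ⟨σ * τ, by rw [MulMemClass.coe_mul, hσ, hτ, pMat_mul]⟩
  one_mem' := ⟨1, by rw [pMat_one]; rfl⟩
  inv_mem' := by
    rintro a ⟨σ, hσ⟩
    exact ⟨σ⁻¹, by rw [coe_inv_U8, hσ, star_pMat]⟩

/-- the subgroup of diagonal unitary matrices. -/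
def DiagSG : Subgroup U8 where
  carrier := {u : U8 | ∃ d : Fin 8 → ℂ, (u : M8) = Matrix.diagonal d}
  mul_mem' := by
    rintro a b ⟨da, ha⟩ ⟨db, hb⟩
    exact ⟨fun m => da m * db m,
      by rw [MulMemClass.coe_mul, ha, hb, Matrix.diagonal_mul_diagonal]⟩
  one_mem' := ⟨fun _ => 1, by rw [Matrix.diagonal_one]; rfl⟩
  inv_mem' := by
    rintro a ⟨d, hd⟩
    refine ⟨fun m => star (d m), ?_⟩
    rw [coe_inv_U8, hd, Matrix.star_eq_conjTranspose, Matrix.diagonal_conjTranspose]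
    rfl

lemma Q_le_Perm : Qgrp ≤ PermSG := by
  rw [Qgrp]
  apply (Subgroup.closure_le _).2
  rintro v (h|h|h|h)
  exacts [⟨σX0, h⟩, ⟨σC10, h⟩, ⟨σC20, h⟩, ⟨σCC, h⟩]

lemma D_le_Diag : Dgrp ≤ DiagSG := by
  rw [Dgrp]
  apply (Subgroup.closure_le _).2
  rintro v (h|h|h|h|h|h|h|h)
  exacts [⟨dω, h⟩, ⟨dS0, h⟩, ⟨dS1, h⟩, ⟨dS2, h⟩, ⟨dCS01, h⟩, ⟨dCS12, h⟩, ⟨dCS02, h⟩, ⟨dCCZ, h⟩]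

lemma QD_triv (u : U8) (hq : u ∈ Qgrp) (hd : u ∈ Dgrp) : u = 1 := by
  obtain ⟨σ, hσ⟩ := Q_le_Perm hq
  obtain ⟨d, hdd⟩ := D_le_Diag hd
  have key : ∀ s, σ s = s := by
    intro s
    by_contra hne
    have := congrFun (congrFun (hσ.symm.trans hdd) (σ s)) s
    rw [Matrix.diagonal_apply_ne _ hne] at this
    simp [pMat, permMat] at this
  have hσ1 : σ = 1 := Equiv.ext key
  apply Subtype.ext
  rw [hσ, hσ1, pMat_one]; rfl

lemma Q_le_QD : Qgrp ≤ QDgrp :=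
  Subgroup.closure_mono (fun u hu => Set.mem_union_left _ hu)

lemma D_le_QD : Dgrp ≤ QDgrp :=
  Subgroup.closure_mono (fun u hu => Set.mem_union_right _ hu)

lemma QD_factor : ∀ u ∈ QDgrp, ∃ q ∈ Qgrp, ∃ d ∈ Dgrp, u = q * d := by
  intro u hu
  induction hu using Subgroup.closure_induction with
  | mem v hv =>
      rcases hv with h | h
      · exact ⟨v, Subgroup.subset_closure h, 1, one_mem _, (mul_one v).symm⟩
      · exact ⟨1, one_mem _, v, Subgroup.subset_closure h, (one_mul v).symm⟩
  | one => exact ⟨1, one_mem _, 1, one_mem _, (one_mul 1).symm⟩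
  | mul a b ha hb iha ihb =>
      obtain ⟨q1, hq1, d1, hd1, rfl⟩ := iha
      obtain ⟨q2, hq2, d2, hd2, rfl⟩ := ihb
      refine ⟨q1 * q2, mul_mem hq1 hq2, (q2⁻¹ * d1 * q2) * d2,
        mul_mem ((Qnorm q2 hq2).2 d1 hd1) hd2, ?_⟩
      group
  | inv a ha iha =>
      obtain ⟨q, hq, d, hd, rfl⟩ := iha
      refine ⟨q⁻¹, inv_mem hq, q * d⁻¹ * q⁻¹, (Qnorm q hq).1 d⁻¹ (inv_mem hd), ?_⟩
      group

end Aux5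
/-- `D` is normal in `QD` and multiplication `Q × D → QD` is a bijection, i.e. `QD` is the
internal semidirect product `Q ⋉ D`. -/
theorem QD_semidirect :
    Dgrp ≤ QDgrp ∧ (Dgrp.subgroupOf QDgrp).Normal ∧
    Function.Injective (fun p : Qgrp × Dgrp => (p.1 : U8) * (p.2 : U8)) ∧
    Set.range (fun p : Qgrp × Dgrp => (p.1 : U8) * (p.2 : U8)) = (QDgrp : Set U8) := by
  refine ⟨D_le_QD, ⟨?_⟩, ?_, ?_⟩
  · intro n hn g
    rw [Subgroup.mem_subgroupOf] at hn ⊢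
    obtain ⟨q, hq, d0, hd0, hg⟩ := QD_factor (g : U8) g.2
    have hcoe : ((g * n * g⁻¹ : QDgrp) : U8) = (g : U8) * (n : U8) * (g : U8)⁻¹ := by
      push_cast; ring_nf
    rw [hcoe, hg]
    have h1 : d0 * (n : U8) * d0⁻¹ ∈ Dgrp := mul_mem (mul_mem hd0 hn) (inv_mem hd0)
    rw [show (q * d0) * (n : U8) * (q * d0)⁻¹ = q * (d0 * (n : U8) * d0⁻¹) * q⁻¹ by group]
    exact (Qnorm q hq).1 _ h1
  · intro p1 p2 h
    simp only at h
    have key : (p2.1 : U8)⁻¹ * (p1.1 : U8) = (p2.2 : U8) * (p1.2 : U8)⁻¹ := by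
      rw [show ((p2.1 : U8))⁻¹ * (p1.1 : U8)
          = (p2.1 : U8)⁻¹ * ((p1.1 : U8) * (p1.2 : U8)) * (p1.2 : U8)⁻¹ by group, h]
      group
    have huQ : (p2.1 : U8)⁻¹ * (p1.1 : U8) ∈ Qgrp := mul_mem (inv_mem p2.1.2) p1.1.2
    have huD : (p2.1 : U8)⁻¹ * (p1.1 : U8) ∈ Dgrp :=
      key ▸ mul_mem p2.2.2 (inv_mem p1.2.2)
    have h1 := QD_triv _ huQ huD
    have h2 : p1.1 = p2.1 := by
      simpa [mul_assoc] using congrArg (fun x => (p2.1 : U8) * x) h1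
    have hq : (p1.1 : U8) = (p2.1 : U8) := by rw [h2]
    have hd : (p1.2 : U8) = (p2.2 : U8) := by
      apply mul_left_cancel (a := (p1.1 : U8))
      rw [h, hq]
    exact Prod.ext h2 (Subtype.ext hd)
  · ext u
    constructor
    · rintro ⟨⟨q, d⟩, rfl⟩
      exact mul_mem (Q_le_QD q.2) (D_le_QD d.2)
    · intro hu
      obtain ⟨q, hq, d, hd, rfl⟩ := QD_factor u hu
      exact ⟨(⟨q, hq⟩, ⟨d, hd⟩), rfl⟩
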